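/- Let d > 0, let c be a point in the Euclidean plane ℝ², and let S be a finite set of points in ℝ² such that every p ∈ S satisfies ‖p − c‖ < d (Euclidean norm) and any two distinct points p, q ∈ S satisfy ‖p − q‖ ≥ d. Then S has at most 5 elements. -/

import Mathlib

open Real Complex

lemma cos_lt_half_of_sep {u v : ℂ} {D : ℝ} (hu : u ≠ 0) (hv : v ≠ 0)
    (hud : ‖u‖ < D) (hvd : ‖v‖ < D)
    (huv : D ≤ ‖u - v‖) :
    Real.cos (u.arg - v.arg) < 1/2 := by
  have ha : 0 < ‖u‖ := norm_pos_iff.2 hu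
  have hb : 0 < ‖v‖ := norm_pos_iff.2 hv
  have ha2 : (‖u‖)^2 = u.re^2 + u.im^2 := by
    rw [Complex.sq_norm, Complex.normSq_apply]; ring
  have hb2 : (‖v‖)^2 = v.re^2 + v.im^2 := by
    rw [Complex.sq_norm, Complex.normSq_apply]; ring
  have he2 : (‖u - v‖)^2 = (u.re - v.re)^2 + (u.im - v.im)^2 := by
    rw [Complex.sq_norm, Complex.normSq_apply]
    simp [Complex.sub_re, Complex.sub_im]; ring
  rw [Real.cos_sub, Complex.cos_arg hu, Complex.cos_arg hv, Complex.sin_arg, Complex.sin_arg]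
  rw [div_mul_div_comm, div_mul_div_comm, ← add_div, div_lt_iff₀ (by positivity)]
  have hee : (‖u-v‖)^2 ≥ D^2 := by nlinarith [norm_nonneg (u-v)]
  rcases le_total (‖u‖) (‖v‖) with h | h
  · nlinarith [mul_nonneg (sub_nonneg.2 h) ha.le]
  · nlinarith [mul_nonneg (sub_nonneg.2 h) hb.le]

lemma third_pi_lt_abs {t : ℝ} (h1 : |t| ≤ π) (h2 : Real.cos t < 1/2) : π/3 < |t| := by
  by_contra h
  push_neg at h
  have := Real.cos_le_cos_of_nonneg_of_le_pi (abs_nonneg t) (by linarith [Real.pi_pos]) h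
  rw [Real.cos_abs, Real.cos_pi_div_three] at this
  linarith

lemma no_three (lo x y z : ℝ) (hx1 : lo ≤ x) (hx2 : x ≤ lo + 2*π/3)
    (hy1 : lo ≤ y) (hy2 : y ≤ lo + 2*π/3) (hz1 : lo ≤ z) (hz2 : z ≤ lo + 2*π/3)
    (hxy : π/3 < |x - y|) (hyz : π/3 < |y - z|) (hxz : π/3 < |x - z|) : False := by
  rcases lt_abs.1 hxy with h1 | h1 <;> rcases lt_abs.1 hyz with h2 | h2 <;>
    rcases lt_abs.1 hxz with h3 | h3 <;> linarith [Real.pi_pos]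

/-- If every point of a finite set `S` in the Euclidean plane is at Euclidean
distance less than `d` from a point `c`, and any two distinct points of `S` are
at Euclidean distance at least `d`, then `S` has at most 5 elements. -/
theorem unit_disks_packing (d : ℝ) (hd : 0 < d)
    (c : EuclideanSpace ℝ (Fin 2)) (S : Finset (EuclideanSpace ℝ (Fin 2)))
    (h_close : ∀ p ∈ S, ‖p - c‖ < d)
    (h_sep : ∀ p ∈ S, ∀ q ∈ S, p ≠ q → d ≤ ‖p - q‖) :
    S.card ≤ 5 := by
  by_contra hcard
  push_neg at hcard
  have hcS : c ∉ S := by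
    intro hc
    obtain ⟨p, hp, hpc⟩ := Finset.exists_mem_ne (s := S) (by omega) c
    exact absurd (h_sep p hp c hc hpc) (not_le.2 (h_close p hp))
  set e : EuclideanSpace ℝ (Fin 2) ≃ₗᵢ[ℝ] ℂ := Complex.orthonormalBasisOneI.repr.symm with he
  set z : EuclideanSpace ℝ (Fin 2) → ℂ := fun p => e p - e c with hzdef
  have hz : ∀ p, ‖z p‖ = ‖p - c‖ := by
    intro p
    show ‖e p - e c‖ = _
    rw [← map_sub, e.norm_map]
  have hzz : ∀ p q, ‖z p - z q‖ = ‖p - q‖ := by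
    intro p q
    have : z p - z q = e p - e q := by show (e p - e c) - (e q - e c) = _; ring
    rw [this, ← map_sub, e.norm_map]
  have hz0 : ∀ p ∈ S, z p ≠ 0 := by
    intro p hp h0
    have : ‖p - c‖ = 0 := by rw [← hz p, h0]; simp
    have hpc : p = c := by
      have := norm_sub_eq_zero_iff.1 this
      exact this
    exact hcS (hpc ▸ hp)
  obtain ⟨p₀, hp₀⟩ : S.Nonempty := Finset.card_pos.1 (by omega)
  set w : ℂ := z p₀ with hw
  have hw0 : w ≠ 0 := hz0 p₀ hp₀
  have hwa : 0 < ‖w‖ := norm_pos_iff.2 hw0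
  set θ : EuclideanSpace ℝ (Fin 2) → ℝ := fun p => Complex.arg (z p / w) with hθ
  -- key pairwise cosine bound
  have key : ∀ p ∈ S, ∀ q ∈ S, p ≠ q → Real.cos (θ p - θ q) < 1/2 := by
    intro p hp q hq hpq
    have hup : z p / w ≠ 0 := div_ne_zero (hz0 p hp) hw0
    have huq : z q / w ≠ 0 := div_ne_zero (hz0 q hq) hw0
    apply cos_lt_half_of_sep (D := d / ‖w‖) hup huq
    · rw [norm_div, div_lt_div_iff_of_pos_right hwa, hz]
      exact h_close p hp
    · rw [norm_div, div_lt_div_iff_of_pos_right hwa, hz]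
      exact h_close q hq
    · rw [div_sub_div_same, norm_div, div_le_div_iff_of_pos_right hwa, hzz]
      exact h_sep p hp q hq hpq
  have hθp₀ : θ p₀ = 0 := by
    rw [hθ]; simp only [← hw, div_self hw0, Complex.arg_one]
  have hθpi : ∀ p, |θ p| ≤ π := fun p => Complex.abs_arg_le_pi _
  have hfar : ∀ p ∈ S, p ≠ p₀ → π/3 < |θ p| := by
    intro p hp hne
    have := key p hp p₀ hp₀ hne
    rw [hθp₀, sub_zero] at this
    exact third_pi_lt_abs (hθpi p) this
  -- split S.erase p₀ by sign of θ
  classical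
  set T := S.erase p₀ with hT
  have hTcard : 5 ≤ T.card := by
    rw [hT, Finset.card_erase_of_mem hp₀]; omega
  set A := T.filter (fun p => 0 ≤ θ p) with hA
  set B := T.filter (fun p => ¬ 0 ≤ θ p) with hB
  have hAB : A.card + B.card = T.card := Finset.card_filter_add_card_filter_not _
  have hcase : 3 ≤ A.card ∨ 3 ≤ B.card := by omega
  have πpos := Real.pi_pos
  -- a uniform contradiction maker
  have contra : ∀ (lo : ℝ) (x y z : EuclideanSpace ℝ (Fin 2)),
      x ∈ S → y ∈ S → z ∈ S → x ≠ y → x ≠ z → y ≠ z →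
      lo ≤ θ x → θ x ≤ lo + 2*π/3 → lo ≤ θ y → θ y ≤ lo + 2*π/3 →
      lo ≤ θ z → θ z ≤ lo + 2*π/3 → False := by
    intro lo x y zz hx hy hzz hxy hxz hyz lx ux ly uy lz uz
    have gap : ∀ a ∈ S, ∀ b ∈ S, a ≠ b → lo ≤ θ a → θ a ≤ lo + 2*π/3 →
        lo ≤ θ b → θ b ≤ lo + 2*π/3 → π/3 < |θ a - θ b| := by
      intro a ha b hb hab la ua lb ub
      apply third_pi_lt_abs _ (key a ha b hb hab)
      rw [abs_le]; constructor <;> linarith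
    exact no_three lo (θ x) (θ y) (θ zz) lx ux ly uy lz uz
      (gap x hx y hy hxy lx ux ly uy) (gap y hy zz hzz hyz ly uy lz uz)
      (gap x hx zz hzz hxz lx ux lz uz)
  rcases hcase with h3 | h3
  · obtain ⟨t, hts, htc⟩ := Finset.exists_subset_card_eq h3
    obtain ⟨x, y, zz, hxy, hxz, hyz, rfl⟩ := Finset.card_eq_three.1 htc
    have hmem : ∀ a ∈ ({x, y, zz} : Finset _), a ∈ S ∧ a ≠ p₀ ∧ 0 ≤ θ a := by
      intro a ha
      have := hts ha
      rw [hA, Finset.mem_filter, hT, Finset.mem_erase] at this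
      exact ⟨this.1.2, this.1.1, this.2⟩
    obtain ⟨hxS, hxp, hx0⟩ := hmem x (by simp)
    obtain ⟨hyS, hyp, hy0⟩ := hmem y (by simp)
    obtain ⟨hzS, hzp, hz00⟩ := hmem zz (by simp)
    have bx : π/3 < θ x := by have := hfar x hxS hxp; rwa [_root_.abs_of_nonneg hx0] at this
    have by' : π/3 < θ y := by have := hfar y hyS hyp; rwa [_root_.abs_of_nonneg hy0] at this
    have bz : π/3 < θ zz := by have := hfar zz hzS hzp; rwa [_root_.abs_of_nonneg hz00] at this
    have ux : θ x ≤ π := (abs_le.1 (hθpi x)).2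
    have uy : θ y ≤ π := (abs_le.1 (hθpi y)).2
    have uz : θ zz ≤ π := (abs_le.1 (hθpi zz)).2
    exact contra (π/3) x y zz hxS hyS hzS hxy hxz hyz
      bx.le (by linarith) by'.le (by linarith) bz.le (by linarith)
  · obtain ⟨t, hts, htc⟩ := Finset.exists_subset_card_eq h3
    obtain ⟨x, y, zz, hxy, hxz, hyz, rfl⟩ := Finset.card_eq_three.1 htc
    have hmem : ∀ a ∈ ({x, y, zz} : Finset _), a ∈ S ∧ a ≠ p₀ ∧ θ a < 0 := by
      intro a ha
      have := hts ha
      rw [hB, Finset.mem_filter, hT, Finset.mem_erase] at this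
      exact ⟨this.1.2, this.1.1, not_le.1 this.2⟩
    obtain ⟨hxS, hxp, hx0⟩ := hmem x (by simp)
    obtain ⟨hyS, hyp, hy0⟩ := hmem y (by simp)
    obtain ⟨hzS, hzp, hz00⟩ := hmem zz (by simp)
    have bx : θ x < -(π/3) := by
      have := hfar x hxS hxp; rw [abs_of_neg hx0] at this; linarith
    have by' : θ y < -(π/3) := by
      have := hfar y hyS hyp; rw [abs_of_neg hy0] at this; linarith
    have bz : θ zz < -(π/3) := by
      have := hfar zz hzS hzp; rw [abs_of_neg hz00] at this; linarith
    have lx : -π ≤ θ x := (abs_le.1 (hθpi x)).1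
    have ly : -π ≤ θ y := (abs_le.1 (hθpi y)).1
    have lz : -π ≤ θ zz := (abs_le.1 (hθpi zz)).1
    exact contra (-π) x y zz hxS hyS hzS hxy hxz hyz
      lx (by linarith) ly (by linarith) lz (by linarith)
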